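/- The category of semialgebras for the maybe monad on Set (the monad X ↦ X + 1) is isomorphic to the category of algebras for the theory with a unary operation a and a constant •, subject to the equations a(a(x)) = a(x) and a(•) = •, with homomorphisms preserving both operations. -/

import Mathlib

open CategoryTheory

universe u

/-- A semialgebra for the maybe monad `X ↦ X + 1` on `Set`:
a function `f : X + 1 → X` with `f ∘ (f + id) = f ∘ [id, inr]`. -/
structure MaybeSemiAlg : Type (u + 1) where
  X : Type u
  f : X ⊕ PUnit.{u+1} → X
  law : ∀ z : (X ⊕ PUnit.{u+1}) ⊕ PUnit.{u+1}, f (Sum.map f id z) = f (Sum.elim id Sum.inr z)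

/-- Homomorphisms of maybe-semialgebras: `h ∘ f = g ∘ (h + id)`. -/
instance : Category MaybeSemiAlg.{u} where
  Hom A B := { h : A.X → B.X // ∀ w, h (A.f w) = B.f (Sum.map h id w) }
  id A := ⟨id, by intro w; cases w <;> rfl⟩
  comp {A B D} f g := ⟨g.1 ∘ f.1, by
    intro w
    simp only [Function.comp_apply, f.2, g.2]
    cases w <;> rfl⟩
  id_comp f := rfl
  comp_id f := rfl
  assoc f g h := rfl

/-- A pointed set with an idempotent unary operation preserving the point. -/
structure PtIdemAlg : Type (u + 1) where
  X : Type u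
  a : X → X
  pt : X
  idem : ∀ x, a (a x) = a x
  fix : a pt = pt

/-- Homomorphisms preserve both the unary operation and the point. -/
instance : Category PtIdemAlg.{u} where
  Hom A B := { h : A.X → B.X // (∀ x, h (A.a x) = B.a (h x)) ∧ h A.pt = B.pt }
  id A := ⟨id, fun _ => rfl, rfl⟩
  comp {A B D} f g := ⟨g.1 ∘ f.1, by
    refine ⟨fun x => ?_, ?_⟩
    · simp [f.2.1, g.2.1]
    · simp [f.2.2, g.2.2]⟩
  id_comp f := rfl
  comp_id f := rfl
  assoc f g h := rfl

/-- The forward functor. -/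
def Fwd : MaybeSemiAlg.{u} ⥤ PtIdemAlg.{u} where
  obj A := ⟨A.X, fun x => A.f (Sum.inl x), A.f (Sum.inr PUnit.unit),
    fun x => A.law (Sum.inl (Sum.inl x)), A.law (Sum.inl (Sum.inr PUnit.unit))⟩
  map {A B} h := ⟨h.1, fun x => h.2 (Sum.inl x), h.2 (Sum.inr PUnit.unit)⟩
  map_id A := rfl
  map_comp f g := rfl

/-- The backward functor. -/
def Bwd : PtIdemAlg.{u} ⥤ MaybeSemiAlg.{u} where
  obj B := ⟨B.X, Sum.elim B.a (fun _ => B.pt), by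
    rintro ((x | u) | u) <;> simp [B.idem, B.fix]⟩
  map {A B} h := ⟨h.1, by rintro (x | u) <;> simp [h.2.1, h.2.2]⟩
  map_id A := rfl
  map_comp f g := rfl

lemma ma_ext {X : Type u} {f g : X ⊕ PUnit.{u+1} → X} (h : f = g) {lf lg} :
    MaybeSemiAlg.mk X f lf = MaybeSemiAlg.mk X g lg := by subst h; rfl

lemma fwd_bwd_obj (A : MaybeSemiAlg.{u}) : (Fwd ⋙ Bwd).obj A = A := by
  cases A with
  | mk X f law =>
    apply ma_ext
    funext w
    rcases w with x | u
    · rfl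
    · cases u; rfl

lemma bwd_fwd_obj (B : PtIdemAlg.{u}) : (Bwd ⋙ Fwd).obj B = B := by
  cases B; rfl

lemma eqToHom_ma {A B : MaybeSemiAlg.{u}} (p : A = B) (x : A.X) :
    (eqToHom p).1 x = cast (congrArg MaybeSemiAlg.X p) x := by subst p; rfl

lemma eqToHom_pi {A B : PtIdemAlg.{u}} (p : A = B) (x : A.X) :
    (eqToHom p).1 x = cast (congrArg PtIdemAlg.X p) x := by subst p; rfl

theorem maybeSemiAlg_iso_ptIdemAlg :
    Nonempty (Cat.of MaybeSemiAlg.{u} ≅ Cat.of PtIdemAlg.{u}) := by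
  refine ⟨{ hom := Fwd.toCatHom, inv := Bwd.toCatHom, hom_inv_id := ?_, inv_hom_id := ?_ }⟩
  · refine Cat.ext <| CategoryTheory.Functor.ext fwd_bwd_obj fun (A B : MaybeSemiAlg.{u}) (h : A ⟶ B) => ?_
    apply Subtype.ext
    funext x
    show h.1 x = (eqToHom (fwd_bwd_obj A) ≫ h ≫ eqToHom (fwd_bwd_obj B).symm).1 x
    show h.1 x = (eqToHom (fwd_bwd_obj B).symm).1 (h.1 ((eqToHom (fwd_bwd_obj A)).1 x))
    rw [eqToHom_ma, eqToHom_ma]; rfl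
  · refine Cat.ext <| CategoryTheory.Functor.ext bwd_fwd_obj fun (A B : PtIdemAlg.{u}) (h : A ⟶ B) => ?_
    apply Subtype.ext
    funext x
    show h.1 x = (eqToHom (bwd_fwd_obj B).symm).1 (h.1 ((eqToHom (bwd_fwd_obj A)).1 x))
    rw [eqToHom_pi, eqToHom_pi]; rfl
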